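/- Let d ≥ 5 and n ≥ 1 be integers, and define A_{ℓ_1,ℓ_2} := coeff_d( ((1-t)^{ℓ_1}(1-t^2)^{ℓ_2}/(1-t)^{n+1}) · (1 - ℓ_1·t^{d-1} - ℓ_2·t^{d-2}) ). Define E_{ℓ_1,ℓ_2} as the fourth finite difference: E_{ℓ_1,ℓ_2} = ∑_{j=0}^{4} (-1)^j C(4,j) A_{ℓ_1-j, ℓ_2+j}. Then for all integers ℓ_1 ≥ 4, ℓ_2 ≥ 0 with ℓ_1 + ℓ_2 < n and m := n - ℓ_1, one has E_{ℓ_1,ℓ_2} = coeff_{d-4}( (1/(1-t))^{m+1-ℓ_2} · (1+t)^{ℓ_2} ), and moreover E_{ℓ_1,ℓ_2} ≥ 2. -/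

import Mathlib

open PowerSeries Finset

/-- `A_{ℓ₁,ℓ₂}` from the paper, for fixed `d` and `n`. -/
noncomputable def A (d n ℓ₁ ℓ₂ : ℕ) : ℚ :=
  PowerSeries.coeff (R := ℚ) d
    ((1 - (PowerSeries.X : PowerSeries ℚ)) ^ ℓ₁ *
      (1 - (PowerSeries.X : PowerSeries ℚ) ^ 2) ^ ℓ₂ *
      ((1 - (PowerSeries.X : PowerSeries ℚ))⁻¹) ^ (n + 1) *
      (1 - (ℓ₁ : PowerSeries ℚ) * PowerSeries.X ^ (d - 1) -
        (ℓ₂ : PowerSeries ℚ) * PowerSeries.X ^ (d - 2)))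

/-- The fourth finite difference `E_{ℓ₁,ℓ₂}`. -/
noncomputable def E (d n ℓ₁ ℓ₂ : ℕ) : ℚ :=
  ∑ j ∈ Finset.range 5, (-1 : ℚ) ^ j * ((4).choose j : ℚ) * A d n (ℓ₁ - j) (ℓ₂ + j)

noncomputable def w : ℚ⟦X⟧ := (1 - X)⁻¹

lemma huw : (1 - X : ℚ⟦X⟧) * w = 1 := by
  apply PowerSeries.mul_inv_cancel; simp

lemma hwpow (M : ℕ) : w ^ M = (invOneSubPow ℚ M).val := by
  have h0 := huw
  have h1 : (1 - X:ℚ⟦X⟧) ^ M * w ^ M = 1 := by rw [← mul_pow, h0, one_pow]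
  have h2 := (invOneSubPow ℚ M).val_inv
  rw [invOneSubPow_inv_eq_one_sub_pow, mul_comm] at h2
  have hu : IsUnit ((1 - X:ℚ⟦X⟧)^M) := by
    have := (invOneSubPow ℚ M).val_inv
    rw [invOneSubPow_inv_eq_one_sub_pow] at this
    exact IsUnit.of_mul_eq_one _ (by rw [mul_comm]; exact this)
  exact hu.mul_left_cancel (h1.trans h2.symm)

lemma coeff_w_pow (M k : ℕ) (hM : 0 < M) : coeff (R := ℚ) k (w ^ M) = ((M - 1 + k).choose (M-1) : ℚ) := by
  rw [hwpow, invOneSubPow_val_eq_mk_sub_one_add_choose_of_pos _ _ hM, coeff_mk]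

lemma coeff_v_pow (b k : ℕ) : coeff (R := ℚ) k ((1 + X : ℚ⟦X⟧) ^ b) = (b.choose k : ℚ) := by
  have h : ((1 + X : ℚ⟦X⟧) ^ b) = (((1 + Polynomial.X) ^ b : Polynomial ℚ) : ℚ⟦X⟧) := by
    rw [Polynomial.coe_pow, Polynomial.coe_add, Polynomial.coe_one, Polynomial.coe_X]
  rw [h, Polynomial.coeff_coe, Polynomial.coeff_one_add_X_pow]

lemma coeff_vw (b m k : ℕ) : coeff (R := ℚ) k ((1+X)^b * w^(m+2))
    = ∑ i ∈ range (k+1), (b.choose i : ℚ) * ((m+1+(k-i)).choose (m+1) : ℚ) := by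
  rw [PowerSeries.coeff_mul, Finset.Nat.sum_antidiagonal_eq_sum_range_succ_mk]
  refine Finset.sum_congr rfl fun i _ => ?_
  rw [coeff_v_pow, coeff_w_pow _ _ (by omega)]
  norm_num

lemma c1 (b m : ℕ) : coeff (R := ℚ) 1 ((1+X)^b * w^(m+2)) = (b:ℚ) + (m+2) := by
  rw [coeff_vw]
  simp [Finset.sum_range_succ, Nat.choose_succ_self_right]
  ring

lemma c2 (b m : ℕ) : coeff (R := ℚ) 2 ((1+X)^b * w^(m+2))
    = ((m+3).choose 2 : ℚ) + (b:ℚ)*(m+2) + (b.choose 2 : ℚ) := by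
  rw [coeff_vw]
  rw [Finset.sum_range_succ, Finset.sum_range_succ, Finset.sum_range_succ, Finset.sum_range_zero]
  norm_num [Nat.choose_succ_self_right]
  rw [show m+1+2 = m+3 by omega, show (m+3).choose (m+1) = (m+3).choose 2 by
    rw [show m+1 = m+3-2 by omega, Nat.choose_symm (by omega)]]
  ring

lemma mainPart (l M d : ℕ) (hd : 4 ≤ d) :
    coeff (R := ℚ) d ((1+X)^l * w^M) - 4 * coeff (R := ℚ) d ((1+X)^(l+1) * w^M)
      + 6 * coeff (R := ℚ) d ((1+X)^(l+2) * w^M) - 4 * coeff (R := ℚ) d ((1+X)^(l+3) * w^M)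
      + coeff (R := ℚ) d ((1+X)^(l+4) * w^M)
    = coeff (R := ℚ) (d-4) ((1+X)^l * w^M) := by
  have hps : (1+X:ℚ⟦X⟧)^l * w^M - (4:ℚ⟦X⟧) * ((1+X)^(l+1) * w^M)
      + (6:ℚ⟦X⟧) * ((1+X)^(l+2) * w^M) - (4:ℚ⟦X⟧) * ((1+X)^(l+3) * w^M)
      + (1+X)^(l+4) * w^M = X^4 * ((1+X)^l * w^M) := by
    simp only [pow_add]
    ring
  have hc : ∀ (c : ℚ) (f : ℚ⟦X⟧) (k : ℕ), coeff (R := ℚ) k ((C (R := ℚ) c) * f) = c * coeff (R := ℚ) k f :=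
    fun c f k => by rw [coeff_C_mul]
  have h4 : (4:ℚ⟦X⟧) = C (R := ℚ) 4 := (map_ofNat (C (R := ℚ)) 4).symm
  have h6 : (6:ℚ⟦X⟧) = C (R := ℚ) 6 := (map_ofNat (C (R := ℚ)) 6).symm
  rw [h4, h6] at hps
  have := congrArg (coeff (R := ℚ) d) hps
  rw [map_add, map_sub, map_add, map_sub, hc, hc, hc] at this
  rw [this]
  obtain ⟨p, rfl⟩ : ∃ p, d = p + 4 := ⟨d - 4, by omega⟩
  rw [show p + 4 = (p+4-4) + 4 from rfl]
  exact PowerSeries.coeff_X_pow_mul _ 4 _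

lemma lb (l m k : ℕ) (hk : 1 ≤ k) : (2:ℚ) ≤ coeff (R := ℚ) k ((1+X)^l * w^(m+2)) := by
  rw [coeff_vw]
  have h0 : (2:ℚ) ≤ (l.choose 0 : ℚ) * ((m+1+(k-0)).choose (m+1) : ℚ) := by
    rw [Nat.choose_zero_right]
    have : m + 2 ≤ m + 1 + (k - 0) := by omega
    have h := Nat.choose_le_choose (m+1) this
    rw [Nat.choose_succ_self_right] at h
    push_cast
    have h2m : (2:ℚ) ≤ ((m+2 : ℕ) : ℚ) := by exact_mod_cast Nat.le_add_left 2 m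
    calc (2:ℚ) ≤ ((m+2:ℕ):ℚ) := h2m
      _ ≤ (((m+1+(k-0)).choose (m+1) : ℕ) : ℚ) := by exact_mod_cast h
      _ = 1 * _ := (one_mul _).symm
  calc (2:ℚ) ≤ _ := h0
    _ ≤ _ := Finset.single_le_sum (f := fun i => (l.choose i : ℚ) * ((m+1+(k-i)).choose (m+1) : ℚ))
        (fun i _ => by positivity) (Finset.mem_range.mpr (by omega))

lemma Ared (d n a b : ℕ) (hd : 2 ≤ d) (hab : a + b ≤ n + 1) :
    A d n a b = coeff (R := ℚ) d ((1+X)^b * w^(n+1-a-b))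
      - a * coeff (R := ℚ) 1 ((1+X)^b * w^(n+1-a-b))
      - b * coeff (R := ℚ) 2 ((1+X)^b * w^(n+1-a-b)) := by
  set M := n + 1 - a - b with hM
  set G : ℚ⟦X⟧ := (1+X)^b * w^M with hG
  have hFS : (1 - X:ℚ⟦X⟧)^a * (1 - X^2)^b * w^(n+1) = G := by
    have e1 : (1 - X^2 : ℚ⟦X⟧) = (1-X)*(1+X) := by ring
    have e2 : n+1 = (a+b) + M := by omega
    rw [e1, mul_pow, e2, pow_add, pow_add]
    have e3 : (1-X:ℚ⟦X⟧)^a * ((1-X)^b * (1+X)^b) * (w^a * w^b * w^M)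
        = ((1-X)^a * w^a) * (((1-X)^b * w^b) * ((1+X)^b * w^M)) := by ring
    rw [e3, ← mul_pow, ← mul_pow, huw, one_pow, one_pow, one_mul, one_mul]
  obtain ⟨p, rfl⟩ : ∃ p, d = p + 2 := ⟨d - 2, by omega⟩
  unfold A
  rw [show ((1 - X:ℚ⟦X⟧))⁻¹ = w from rfl, hFS]
  rw [mul_sub, mul_sub, mul_one, map_sub, map_sub]
  rw [show p + 2 - 1 = p + 1 from rfl, show p + 2 - 2 = p from rfl]
  congr 1
  · congr 1
    have h1 : G * ((a:ℚ⟦X⟧) * X ^ (p + 1)) = ((a:ℕ) • G) * X ^ (p+1) := by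
      rw [nsmul_eq_mul]; ring
    rw [h1]
    have e : p + 2 = 1 + (p + 1) := by omega
    rw [e, coeff_mul_X_pow, map_nsmul, nsmul_eq_mul]
  · have h1 : G * ((b:ℚ⟦X⟧) * X ^ p) = ((b:ℕ) • G) * X ^ p := by
      rw [nsmul_eq_mul]; ring
    rw [h1]
    have e : p + 2 = 2 + p := by omega
    rw [e, coeff_mul_X_pow, map_nsmul, nsmul_eq_mul]

theorem stmt9 (d n ℓ₁ ℓ₂ : ℕ) (hd : 5 ≤ d) (hn : 1 ≤ n) (hℓ₁ : 4 ≤ ℓ₁)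
    (h : ℓ₁ + ℓ₂ < n) :
    E d n ℓ₁ ℓ₂ =
      PowerSeries.coeff (R := ℚ) (d - 4)
        (((1 - (PowerSeries.X : PowerSeries ℚ))⁻¹) ^ (n - ℓ₁ + 1 - ℓ₂) *
          (1 + (PowerSeries.X : PowerSeries ℚ)) ^ ℓ₂) ∧
    2 ≤ E d n ℓ₁ ℓ₂ := by
  set m := n - ℓ₁ - ℓ₂ - 1 with hm
  have hA : ∀ j, j ≤ 4 → A d n (ℓ₁ - j) (ℓ₂ + j) =
      coeff (R := ℚ) d ((1+X)^(ℓ₂+j) * w^(m+2))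
        - ((ℓ₁ - j : ℕ) : ℚ) * coeff (R := ℚ) 1 ((1+X)^(ℓ₂+j) * w^(m+2))
        - ((ℓ₂ + j : ℕ) : ℚ) * coeff (R := ℚ) 2 ((1+X)^(ℓ₂+j) * w^(m+2)) := by
    intro j hj
    rw [Ared d n (ℓ₁-j) (ℓ₂+j) (by omega) (by omega),
      show n+1-(ℓ₁-j)-(ℓ₂+j) = m+2 by omega]
  have key : E d n ℓ₁ ℓ₂ = coeff (R := ℚ) (d-4) ((1+X)^ℓ₂ * w^(m+2)) := by
    unfold E
    rw [Finset.sum_range_succ, Finset.sum_range_succ, Finset.sum_range_succ,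
      Finset.sum_range_succ, Finset.sum_range_succ, Finset.sum_range_zero]
    rw [hA 0 (by omega), hA 1 (by omega), hA 2 (by omega), hA 3 (by omega), hA 4 (by omega)]
    simp only [Nat.add_zero, Nat.sub_zero]
    rw [c1, c1, c1, c1, c1, c2, c2, c2, c2, c2]
    simp only [Nat.cast_choose_two]
    rw [Nat.cast_sub (show 1 ≤ ℓ₁ by omega), Nat.cast_sub (show 2 ≤ ℓ₁ by omega),
      Nat.cast_sub (show 3 ≤ ℓ₁ by omega), Nat.cast_sub (show 4 ≤ ℓ₁ by omega)]
    push_cast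
    have hmp := mainPart ℓ₂ (m+2) d (by omega)
    norm_num
    linear_combination hmp
  constructor
  · rw [key, show n - ℓ₁ + 1 - ℓ₂ = m + 2 by omega]
    exact congrArg (coeff (R := ℚ) (d-4)) (mul_comm _ _)
  · rw [key]
    exact lb ℓ₂ m (d-4) (by omega)
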